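/- arXiv:2308.07806 — 2 statements merged into one kernel-verified Lean document; each statement's English description precedes it below -/
import Mathlib

section
/- Let 0 < ν ≤ 1, let a < b be real numbers, let q be a positive integer, and let Ω₀⁻¹ : [a,b] → ℝ^{q×q} be a function taking values in the positive definite q×q matrices whose entries are all uniformly ν-Hölder on [a,b]. Then for every ε > 0 there exist a positive integer N, real numbers μ₁, …, μ_N, a real number σ² > 0, and positive definite q×q matrices Ω₁⁻¹, …, Ω_N⁻¹ such that, defining the Gaussian softmax weights π_j(x) = exp(−(x−μ_j)²/(2σ²)) / Σ_{t=1}^{N} exp(−(x−μ_t)²/(2σ²)), one has ∫_a^b ‖Ω₀⁻¹(x) − Σ_{j=1}^{N} π_j(x) · Ω_j⁻¹‖_F dx < ε. -/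
open MeasureTheory

/-- Frobenius norm of a square real matrix. -/
noncomputable def frobNorm {q : ℕ} (A : Matrix (Fin q) (Fin q) ℝ) : ℝ :=
  Real.sqrt (∑ i, ∑ j, (A i j) ^ 2)

section aux

attribute [local instance] Matrix.frobeniusNormedAddCommGroup Matrix.frobeniusNormedSpace

lemma frobNorm_eq_norm {q : ℕ} (A : Matrix (Fin q) (Fin q) ℝ) : frobNorm A = ‖A‖ := by
  rw [Matrix.frobenius_norm_def, frobNorm, Real.sqrt_eq_rpow]
  congr 1
  refine Finset.sum_congr rfl fun i _ => Finset.sum_congr rfl fun j _ => ?_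
  rw [Real.norm_eq_abs, show (2:ℝ) = ((2:ℕ):ℝ) by norm_num, Real.rpow_natCast, sq_abs]

lemma frobNorm_nonneg {q : ℕ} (A : Matrix (Fin q) (Fin q) ℝ) : 0 ≤ frobNorm A :=
  Real.sqrt_nonneg _

lemma frobNorm_le_of_entries {q : ℕ} {A : Matrix (Fin q) (Fin q) ℝ} {c : ℝ} (hc : 0 ≤ c)
    (h : ∀ i j, |A i j| ≤ c) : frobNorm A ≤ q * c := by
  have hsum : (∑ i : Fin q, ∑ j : Fin q, c ^ 2) = ((q : ℝ) * c) ^ 2 := by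
    simp [Finset.sum_const, Finset.card_univ, nsmul_eq_mul]; ring
  have h1 : ∑ i, ∑ j, (A i j) ^ 2 ≤ ∑ i : Fin q, ∑ j : Fin q, c ^ 2 := by
    refine Finset.sum_le_sum fun i _ => Finset.sum_le_sum fun j _ => ?_
    calc (A i j) ^ 2 = |A i j| ^ 2 := (sq_abs _).symm
    _ ≤ c ^ 2 := pow_le_pow_left₀ (abs_nonneg _) (h i j) 2
  calc frobNorm A ≤ Real.sqrt (∑ i : Fin q, ∑ j : Fin q, c ^ 2) := Real.sqrt_le_sqrt h1
  _ = Real.sqrt (((q : ℝ) * c) ^ 2) := by rw [hsum]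
  _ = (q : ℝ) * c := Real.sqrt_sq (by positivity)

lemma frob_convex {q N : ℕ} (A : Matrix (Fin q) (Fin q) ℝ) (B : Fin N → Matrix (Fin q) (Fin q) ℝ)
    (w : Fin N → ℝ) (hw : ∀ j, 0 ≤ w j) (hs : ∑ j, w j = 1) :
    frobNorm (A - ∑ j, w j • B j) ≤ ∑ j, w j * frobNorm (A - B j) := by
  have key : A - ∑ j, w j • B j = ∑ j, w j • (A - B j) := by
    simp_rw [smul_sub]
    rw [Finset.sum_sub_distrib, ← Finset.sum_smul, hs, one_smul]
  rw [key, frobNorm_eq_norm]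
  refine (norm_sum_le _ _).trans ?_
  refine Finset.sum_le_sum fun j _ => ?_
  rw [norm_smul, Real.norm_of_nonneg (hw j), frobNorm_eq_norm]

end aux

lemma grid_near {a b : ℝ} (hab : a < b) {N : ℕ} (hN : 0 < N) {x : ℝ}
    (hx : x ∈ Set.Icc a b) :
    ∃ j : Fin N, |x - (a + ((j : ℝ) + 1/2) * ((b - a) / N))| ≤ (b - a) / N / 2 := by
  set h : ℝ := (b - a) / N with hh_def
  have hN' : (0:ℝ) < N := Nat.cast_pos.mpr hN
  have hh : 0 < h := div_pos (by linarith [hx.1, hx.2, hab]) hN'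
  set y : ℝ := (x - a) / h with hy_def
  have hy0 : 0 ≤ y := div_nonneg (by linarith [hx.1]) hh.le
  have hyN : y ≤ N := by
    rw [hy_def, div_le_iff₀ hh]
    have : (N : ℝ) * h = b - a := by rw [hh_def]; field_simp
    linarith [hx.2]
  have hfl0 : 0 ≤ ⌊y⌋ := Int.floor_nonneg.mpr hy0
  set j0 : ℕ := ⌊y⌋.toNat with hj0_def
  have hcastj0 : ((j0 : ℕ) : ℝ) = ((⌊y⌋ : ℤ) : ℝ) := by
    rw [hj0_def]; exact_mod_cast congrArg (Int.cast : ℤ → ℝ) (Int.toNat_of_nonneg hfl0)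
  have hj0y : (j0 : ℝ) ≤ y := by rw [hcastj0]; exact Int.floor_le y
  set j : ℕ := min j0 (N - 1) with hj_def
  have hjN : j < N := lt_of_le_of_lt (min_le_right _ _) (Nat.pred_lt hN.ne')
  refine ⟨⟨j, hjN⟩, ?_⟩
  have hjy : (j : ℝ) ≤ y := le_trans (by exact_mod_cast min_le_left j0 (N-1)) hj0y
  have hyj1 : y ≤ (j : ℝ) + 1 := by
    by_cases hcase : j0 ≤ N - 1
    · have : j = j0 := min_eq_left hcase
      rw [this]
      have := Int.lt_floor_add_one y
      rw [hcastj0]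
      linarith
    · have : j = N - 1 := min_eq_right (le_of_not_ge hcase)
      rw [this]
      have : ((N - 1 : ℕ) : ℝ) + 1 = N := by
        push_cast [Nat.cast_sub hN]
        ring
      rw [this]
      exact hyN
  -- so j * h ≤ x - a ≤ (j+1) * h
  have hlow : (j : ℝ) * h ≤ x - a := by
    have := (le_div_iff₀ hh).mp (hy_def ▸ hjy)
    linarith
  have hhigh : x - a ≤ ((j : ℝ) + 1) * h := by
    have := (div_le_iff₀ hh).mp (hy_def ▸ hyj1)
    linarith
  rw [abs_le]
  constructor <;> simp only [Fin.val_mk] <;> [nlinarith; nlinarith]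

set_option maxHeartbeats 2000000 in
theorem stmt3 (ν : ℝ) (hν0 : 0 < ν) (hν1 : ν ≤ 1) (a b : ℝ) (hab : a < b)
    (q : ℕ) (hq : 0 < q) (Ω : ℝ → Matrix (Fin q) (Fin q) ℝ)
    (hpd : ∀ x ∈ Set.Icc a b, (Ω x).PosDef)
    (hhold : ∀ i j : Fin q, ∃ H : ℝ, ∀ x ∈ Set.Icc a b, ∀ x' ∈ Set.Icc a b,
      |Ω x i j - Ω x' i j| ≤ H * |x - x'| ^ ν) :
    ∀ ε > 0, ∃ N : ℕ, 0 < N ∧ ∃ μ : Fin N → ℝ, ∃ σ2 : ℝ, 0 < σ2 ∧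
      ∃ Ωs : Fin N → Matrix (Fin q) (Fin q) ℝ, (∀ j, (Ωs j).PosDef) ∧
        (∫ x in Set.Ioc a b,
          frobNorm (Ω x - ∑ j : Fin N,
            (Real.exp (-(x - μ j) ^ 2 / (2 * σ2)) /
              ∑ t : Fin N, Real.exp (-(x - μ t) ^ 2 / (2 * σ2))) • Ωs j))
          < ε := by
  classical
  intro ε hε
  -- uniform Hölder constant
  choose Hc hHc using hhold
  set H : ℝ := 1 + ∑ i : Fin q, ∑ j : Fin q, |Hc i j| with hH_def
  have hH1 : 1 ≤ H := by
    have : (0:ℝ) ≤ ∑ i : Fin q, ∑ j : Fin q, |Hc i j| :=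
      Finset.sum_nonneg fun i _ => Finset.sum_nonneg fun j _ => abs_nonneg _
    linarith
  have hH0 : 0 < H := lt_of_lt_of_le one_pos hH1
  have hHij : ∀ i j : Fin q, Hc i j ≤ H := by
    intro i j
    have h1 : |Hc i j| ≤ ∑ j' : Fin q, |Hc i j'| :=
      Finset.single_le_sum (f := fun j' => |Hc i j'|) (fun j' _ => abs_nonneg _)
        (Finset.mem_univ j)
    have h2 : (∑ j' : Fin q, |Hc i j'|) ≤ ∑ i' : Fin q, ∑ j' : Fin q, |Hc i' j'| :=
      Finset.single_le_sum (f := fun i' => ∑ j' : Fin q, |Hc i' j'|)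
        (fun i' _ => Finset.sum_nonneg fun j' _ => abs_nonneg _) (Finset.mem_univ i)
    have := le_abs_self (Hc i j)
    rw [hH_def]; linarith
  have hq' : (0:ℝ) < q := Nat.cast_pos.mpr hq
  have hΩ : ∀ x ∈ Set.Icc a b, ∀ x' ∈ Set.Icc a b,
      frobNorm (Ω x - Ω x') ≤ q * (H * |x - x'| ^ ν) := by
    intro x hx x' hx'
    refine frobNorm_le_of_entries (by positivity) fun i j => ?_
    have h1 := hHc i j x hx x' hx'
    have h2 : Hc i j * |x - x'| ^ ν ≤ H * |x - x'| ^ ν :=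
      mul_le_mul_of_nonneg_right (hHij i j) (Real.rpow_nonneg (abs_nonneg _) ν)
    calc |(Ω x - Ω x') i j| = |Ω x i j - Ω x' i j| := by rw [Matrix.sub_apply]
    _ ≤ Hc i j * |x - x'| ^ ν := h1
    _ ≤ H * |x - x'| ^ ν := h2
  set D : ℝ := b - a with hD_def
  have hD : 0 < D := by rw [hD_def]; linarith
  set δ : ℝ := ε / (3 * D * (q * H)) with hδ_def
  have hδ : 0 < δ := by
    rw [hδ_def]; exact div_pos hε (by positivity)
  -- choose N
  obtain ⟨N₀, hN₀⟩ := exists_nat_ge (D / δ ^ (ν⁻¹))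
  set N : ℕ := max N₀ 1 with hN_def
  have hN : 0 < N := lt_of_lt_of_le one_pos (le_max_right _ _)
  have hN' : (0:ℝ) < N := Nat.cast_pos.mpr hN
  set h : ℝ := D / N with hh_def
  have hh : 0 < h := div_pos hD hN'
  have hδν : 0 < δ ^ (ν⁻¹) := Real.rpow_pos_of_pos hδ _
  have hhδ : h ^ ν ≤ δ := by
    have hle : h ≤ δ ^ (ν⁻¹) := by
      rw [hh_def, div_le_iff₀ hN']
      have h1 : D / δ ^ (ν⁻¹) ≤ (N₀ : ℝ) := hN₀
      have h2 : (N₀ : ℝ) ≤ N := by exact_mod_cast le_max_left N₀ 1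
      have h3 := (div_le_iff₀ hδν).mp h1
      nlinarith [mul_le_mul_of_nonneg_right h2 hδν.le]
    calc h ^ ν ≤ (δ ^ (ν⁻¹)) ^ ν := Real.rpow_le_rpow hh.le hle hν0.le
    _ = δ := Real.rpow_inv_rpow hδ.le hν0.ne'
  set μ : Fin N → ℝ := fun j => a + ((j : ℝ) + 1/2) * h with hμ_def
  have hμIcc : ∀ j, μ j ∈ Set.Icc a b := by
    intro j
    have hj1 : (j : ℝ) + 1 ≤ N := by exact_mod_cast j.isLt
    have hNh : (N : ℝ) * h = D := by rw [hh_def]; field_simp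
    simp only [hμ_def, Set.mem_Icc]
    constructor
    · nlinarith
    · nlinarith
  set B : ℝ := q * (H * D ^ ν) with hB_def
  have hB0 : 0 ≤ B := by rw [hB_def]; positivity
  have hgB : ∀ x ∈ Set.Icc a b, ∀ j : Fin N, frobNorm (Ω x - Ω (μ j)) ≤ B := by
    intro x hx j
    refine (hΩ x hx (μ j) (hμIcc j)).trans ?_
    have habs : |x - μ j| ≤ D := by
      have h1 := hx.1; have h2 := hx.2
      have h3 := (hμIcc j).1; have h4 := (hμIcc j).2
      rw [abs_le]; constructor <;> [linarith; linarith]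
    have : |x - μ j| ^ ν ≤ D ^ ν := Real.rpow_le_rpow (abs_nonneg _) habs hν0.le
    rw [hB_def]
    nlinarith [mul_le_mul_of_nonneg_left this (mul_nonneg hq'.le hH0.le)]
  set c : ℝ := 3/4 * h ^ 2 with hc_def
  have hc : 0 < c := by rw [hc_def]; positivity
  set η : ℝ := ε / (3 * D * N * (B + 1)) with hη_def
  have hη : 0 < η := by rw [hη_def]; exact div_pos hε (by positivity)
  set M : ℝ := max 1 (-Real.log η) with hM_def
  have hM : 0 < M := lt_of_lt_of_le one_pos (le_max_left _ _)
  set σ2 : ℝ := c / (2 * M) with hσ2_def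
  have hσ2 : 0 < σ2 := div_pos hc (by positivity)
  have hexpM : -c / (2 * σ2) = -M := by
    rw [hσ2_def]
    field_simp [hc.ne', hM.ne']
  have hE : Real.exp (-h ^ 2 / (2 * σ2)) / Real.exp (-((h/2) ^ 2) / (2 * σ2)) ≤ η := by
    rw [← Real.exp_sub]
    have heq : -h ^ 2 / (2 * σ2) - -((h/2) ^ 2) / (2 * σ2) = -c / (2 * σ2) := by
      rw [hc_def]; ring
    rw [heq, hexpM]
    calc Real.exp (-M) ≤ Real.exp (Real.log η) := by
          refine Real.exp_le_exp.mpr ?_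
          have : -Real.log η ≤ M := le_max_right _ _
          linarith
    _ = η := Real.exp_log hη
  -- the answer
  refine ⟨N, hN, μ, σ2, hσ2, fun j => Ω (μ j), fun j => hpd _ (hμIcc j), ?_⟩
  -- key equalities
  have heq1 : (q : ℝ) * (H * δ) = ε / (3 * D) := by
    rw [hδ_def]; field_simp
  have heq2 : (N : ℝ) * (η * (B + 1)) = ε / (3 * D) := by
    rw [hη_def]; field_simp
  -- pointwise bound
  have key : ∀ x ∈ Set.Ioc a b,
      frobNorm (Ω x - ∑ j : Fin N,
        (Real.exp (-(x - μ j) ^ 2 / (2 * σ2)) /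
          ∑ t : Fin N, Real.exp (-(x - μ t) ^ 2 / (2 * σ2))) • Ω (μ j))
        ≤ ε / (3 * D) + ε / (3 * D) := by
    intro x hx
    have hxI : x ∈ Set.Icc a b := ⟨hx.1.le, hx.2⟩
    set w : Fin N → ℝ := fun t => Real.exp (-(x - μ t) ^ 2 / (2 * σ2)) with hw_def
    have hwpos : ∀ t, 0 < w t := fun t => Real.exp_pos _
    set S : ℝ := ∑ t : Fin N, w t with hS_def
    have hS : 0 < S := Finset.sum_pos (fun t _ => hwpos t) ⟨⟨0, hN⟩, Finset.mem_univ _⟩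
    set π : Fin N → ℝ := fun j => w j / S with hπ_def
    have hπ0 : ∀ j, 0 ≤ π j := fun j => div_nonneg (hwpos j).le hS.le
    have hπ1 : ∑ j : Fin N, π j = 1 := by
      rw [hπ_def]; rw [← Finset.sum_div, ← hS_def, div_self hS.ne']
    have hconv := frob_convex (Ω x) (fun j => Ω (μ j)) π hπ0 hπ1
    refine le_trans hconv ?_
    -- nearest grid point
    obtain ⟨jstar, hjstar⟩ := grid_near hab hN hxI
    have hjstar' : |x - μ jstar| ≤ h / 2 := by
      have : (b - a) / N / 2 = h / 2 := by rw [hh_def, hD_def]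
      rw [← this]
      simpa [hμ_def, hh_def, hD_def] using hjstar
    have hfar : ∀ j : Fin N, h < |x - μ j| → π j ≤ η := by
      intro j hj
      have hwub : w j ≤ Real.exp (-h ^ 2 / (2 * σ2)) := by
        refine Real.exp_le_exp.mpr ?_
        have : h ^ 2 ≤ (x - μ j) ^ 2 := by
          have := pow_le_pow_left₀ hh.le hj.le 2
          rwa [sq_abs] at this
        have h2σ : 0 < 2 * σ2 := by positivity
        rw [div_le_div_iff_of_pos_right h2σ]
        linarith
      have hwlb : Real.exp (-((h/2) ^ 2) / (2 * σ2)) ≤ S := by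
        refine le_trans ?_ (Finset.single_le_sum (fun t _ => (hwpos t).le) (Finset.mem_univ jstar))
        refine Real.exp_le_exp.mpr ?_
        have : (x - μ jstar) ^ 2 ≤ (h/2) ^ 2 := by
          have := pow_le_pow_left₀ (abs_nonneg (x - μ jstar)) hjstar' 2
          rwa [sq_abs] at this
        have h2σ : 0 < 2 * σ2 := by positivity
        rw [div_le_div_iff_of_pos_right h2σ]
        linarith
      refine le_trans ?_ hE
      exact div_le_div₀ (Real.exp_pos _).le hwub (Real.exp_pos _) hwlb
    -- split the sum
    have hsplit := Finset.sum_filter_add_sum_filter_not Finset.univ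
      (fun j : Fin N => |x - μ j| ≤ h) (fun j => π j * frobNorm (Ω x - Ω (μ j)))
    rw [← hsplit]
    have hnear : (∑ j ∈ Finset.univ.filter (fun j : Fin N => |x - μ j| ≤ h),
        π j * frobNorm (Ω x - Ω (μ j))) ≤ ε / (3 * D) := by
      have hK : 0 ≤ (q : ℝ) * (H * h ^ ν) := by positivity
      have step : ∀ j ∈ Finset.univ.filter (fun j : Fin N => |x - μ j| ≤ h),
          π j * frobNorm (Ω x - Ω (μ j)) ≤ π j * ((q : ℝ) * (H * h ^ ν)) := by
        intro j hj
        rw [Finset.mem_filter] at hj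
        refine mul_le_mul_of_nonneg_left ?_ (hπ0 j)
        refine (hΩ x hxI (μ j) (hμIcc j)).trans ?_
        have : |x - μ j| ^ ν ≤ h ^ ν := Real.rpow_le_rpow (abs_nonneg _) hj.2 hν0.le
        nlinarith [mul_le_mul_of_nonneg_left this (mul_nonneg hq'.le hH0.le)]
      refine le_trans (Finset.sum_le_sum step) ?_
      rw [← Finset.sum_mul]
      have hsub : (∑ j ∈ Finset.univ.filter (fun j : Fin N => |x - μ j| ≤ h), π j) ≤ 1 := by
        rw [← hπ1]
        exact Finset.sum_le_sum_of_subset_of_nonneg (Finset.filter_subset _ _)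
          (fun j _ _ => hπ0 j)
      calc (∑ j ∈ Finset.univ.filter (fun j : Fin N => |x - μ j| ≤ h), π j) *
            ((q : ℝ) * (H * h ^ ν)) ≤ 1 * ((q : ℝ) * (H * h ^ ν)) :=
          mul_le_mul_of_nonneg_right hsub hK
      _ = (q : ℝ) * (H * h ^ ν) := one_mul _
      _ ≤ (q : ℝ) * (H * δ) := by
          nlinarith [mul_le_mul_of_nonneg_left hhδ (mul_nonneg hq'.le hH0.le)]
      _ = ε / (3 * D) := heq1
    have hfarsum : (∑ j ∈ Finset.univ.filter (fun j : Fin N => ¬ |x - μ j| ≤ h),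
        π j * frobNorm (Ω x - Ω (μ j))) ≤ ε / (3 * D) := by
      have step : ∀ j ∈ Finset.univ.filter (fun j : Fin N => ¬ |x - μ j| ≤ h),
          π j * frobNorm (Ω x - Ω (μ j)) ≤ η * (B + 1) := by
        intro j hj
        rw [Finset.mem_filter] at hj
        have hπη : π j ≤ η := hfar j (not_le.mp hj.2)
        have hg : frobNorm (Ω x - Ω (μ j)) ≤ B + 1 := by
          have := hgB x hxI j; linarith
        exact mul_le_mul hπη hg (frobNorm_nonneg _) hη.le
      refine le_trans (Finset.sum_le_card_nsmul _ _ _ step) ?_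
      have hcard : ((Finset.univ.filter (fun j : Fin N => ¬ |x - μ j| ≤ h)).card : ℝ) ≤ N := by
        have := Finset.card_filter_le Finset.univ (fun j : Fin N => ¬ |x - μ j| ≤ h)
        simp only [Finset.card_univ, Fintype.card_fin] at this
        exact_mod_cast this
      rw [nsmul_eq_mul]
      calc ((Finset.univ.filter (fun j : Fin N => ¬ |x - μ j| ≤ h)).card : ℝ) * (η * (B + 1))
          ≤ (N : ℝ) * (η * (B + 1)) := mul_le_mul_of_nonneg_right hcard (by positivity)
      _ = ε / (3 * D) := heq2
    linarith
  -- integrate the bound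
  have hIoc : volume (Set.Ioc a b) < ⊤ := measure_Ioc_lt_top
  have hint := norm_setIntegral_le_of_norm_le_const_ae' (μ := volume) hIoc
    (C := ε / (3 * D) + ε / (3 * D)) (f := fun x =>
      frobNorm (Ω x - ∑ j : Fin N,
        (Real.exp (-(x - μ j) ^ 2 / (2 * σ2)) /
          ∑ t : Fin N, Real.exp (-(x - μ t) ^ 2 / (2 * σ2))) • Ω (μ j)))
    (Filter.Eventually.of_forall fun x hx => by
      rw [Real.norm_of_nonneg (frobNorm_nonneg _)]
      exact key x hx)
  have hvol : (volume (Set.Ioc a b)).toReal = D := by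
    rw [Real.volume_Ioc, ENNReal.toReal_ofReal (by linarith : (0:ℝ) ≤ b - a), hD_def]
  calc (∫ x in Set.Ioc a b,
        frobNorm (Ω x - ∑ j : Fin N,
          (Real.exp (-(x - μ j) ^ 2 / (2 * σ2)) /
            ∑ t : Fin N, Real.exp (-(x - μ t) ^ 2 / (2 * σ2))) • Ω (μ j)))
      ≤ ‖∫ x in Set.Ioc a b,
        frobNorm (Ω x - ∑ j : Fin N,
          (Real.exp (-(x - μ j) ^ 2 / (2 * σ2)) /
            ∑ t : Fin N, Real.exp (-(x - μ t) ^ 2 / (2 * σ2))) • Ω (μ j))‖ :=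
        le_abs_self _
  _ ≤ (ε / (3 * D) + ε / (3 * D)) * (volume (Set.Ioc a b)).toReal := hint
  _ = (ε / (3 * D) + ε / (3 * D)) * D := by rw [hvol]
  _ < ε := by
      rw [← add_div, div_mul_eq_mul_div]
      rw [div_lt_iff₀ (by positivity : (0:ℝ) < 3 * D)]
      nlinarith
end

section
/- Let 0 < ν ≤ 1, let a < b be real numbers, let q be a positive integer, and let Ω₀⁻¹ : [a,b] → ℝ^{q×q} be a function taking values in the positive definite q×q matrices whose entries are all uniformly ν-Hölder on [a,b]. Then for every ε > 0 there exists a positive integer N such that the set of parameter tuples ((μ_j)_{j=1}^{N}, σ², (Ω_j⁻¹)_{j=1}^{N}) ∈ ℝ^N × (0,∞) × (PD_q)^N satisfying ∫_a^b ‖Ω₀⁻¹(x) − Σ_{j=1}^{N} π_j(x) · Ω_j⁻¹‖_F dx < ε, where π_j(x) = exp(−(x−μ_j)²/(2σ²)) / Σ_{t=1}^{N} exp(−(x−μ_t)²/(2σ²)), is a nonempty open subset of ℝ^N × (0,∞) × (PD_q)^N; here PD_q is the set of positive definite q×q real symmetric matrices, viewed as an open subset of the space of symmetric q×q matrices. In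 particular, this set has positive Lebesgue measure. -/
open MeasureTheory

/-- The space of symmetric `q × q` real matrices (with the subspace topology). -/
def SymMat (q : ℕ) : Type := {A : Matrix (Fin q) (Fin q) ℝ // A.IsSymm}

instance (q : ℕ) : TopologicalSpace (SymMat q) :=
  instTopologicalSpaceSubtype

/-- The set of parameter tuples `((μ_j)_j, σ², (Ω_j⁻¹)_j)` lying in
`ℝ^N × (0,∞) × (PD_q)^N` for which the Gaussian-softmax mixture approximates
`Ω₀⁻¹` within `ε` in the integrated Frobenius norm. -/
def goodParams (a b : ℝ) (q N : ℕ) (Ω : ℝ → Matrix (Fin q) (Fin q) ℝ) (ε : ℝ) :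
    Set ((Fin N → ℝ) × ℝ × (Fin N → SymMat q)) :=
  {θ | 0 < θ.2.1 ∧ (∀ j, (θ.2.2 j).1.PosDef) ∧
    (∫ x in Set.Ioc a b,
      frobNorm (Ω x - ∑ j : Fin N,
        (Real.exp (-(x - θ.1 j) ^ 2 / (2 * θ.2.1)) /
          ∑ t : Fin N, Real.exp (-(x - θ.1 t) ^ 2 / (2 * θ.2.1))) • (θ.2.2 j).1))
      < ε}

instance matFirstCountable (q : ℕ) : FirstCountableTopology (Matrix (Fin q) (Fin q) ℝ) :=
  inferInstanceAs (FirstCountableTopology (Fin q → Fin q → ℝ))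

instance symMatFirstCountable (q : ℕ) : FirstCountableTopology (SymMat q) :=
  inferInstanceAs (FirstCountableTopology {A : Matrix (Fin q) (Fin q) ℝ | A.IsSymm})

noncomputable def smw {N : ℕ} (μ : Fin N → ℝ) (s x : ℝ) (j : Fin N) : ℝ :=
  Real.exp (-(x - μ j) ^ 2 / (2 * s)) / ∑ t : Fin N, Real.exp (-(x - μ t) ^ 2 / (2 * s))

theorem smw_denom_pos {N : ℕ} (hN : 0 < N) (μ : Fin N → ℝ) (s x : ℝ) :
    0 < ∑ t : Fin N, Real.exp (-(x - μ t) ^ 2 / (2 * s)) := by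
  haveI : Nonempty (Fin N) := ⟨⟨0, hN⟩⟩
  exact Finset.sum_pos (fun t _ => Real.exp_pos _) Finset.univ_nonempty

theorem smw_nonneg {N : ℕ} (hN : 0 < N) (μ : Fin N → ℝ) (s x : ℝ) (j : Fin N) :
    0 ≤ smw μ s x j :=
  div_nonneg (Real.exp_pos _).le (smw_denom_pos hN μ s x).le

theorem smw_sum {N : ℕ} (hN : 0 < N) (μ : Fin N → ℝ) (s x : ℝ) :
    ∑ j, smw μ s x j = 1 := by
  unfold smw
  rw [← Finset.sum_div]
  exact div_self (smw_denom_pos hN μ s x).ne'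

theorem smw_le {N : ℕ} (hN : 0 < N) (μ : Fin N → ℝ) (s x : ℝ) (j j₀ : Fin N) :
    smw μ s x j ≤ Real.exp ((-(x - μ j) ^ 2 + (x - μ j₀) ^ 2) / (2 * s)) := by
  have he0 : Real.exp (-(x - μ j₀) ^ 2 / (2 * s))
      ≤ ∑ t : Fin N, Real.exp (-(x - μ t) ^ 2 / (2 * s)) :=
    Finset.single_le_sum (f := fun t => Real.exp (-(x - μ t) ^ 2 / (2 * s)))
      (fun t _ => (Real.exp_pos _).le) (Finset.mem_univ j₀)
  have h1 : smw μ s x j ≤ Real.exp (-(x - μ j) ^ 2 / (2 * s)) / Real.exp (-(x - μ j₀) ^ 2 / (2 * s)) := by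
    unfold smw
    apply div_le_div_of_nonneg_left (Real.exp_pos _).le (Real.exp_pos _) he0
  calc smw μ s x j ≤ _ := h1
    _ = Real.exp ((-(x - μ j) ^ 2 + (x - μ j₀) ^ 2) / (2 * s)) := by
        rw [← Real.exp_sub]; congr 1; ring

theorem frobNorm_le {q : ℕ} (A : Matrix (Fin q) (Fin q) ℝ) (c : ℝ) (hc : 0 ≤ c)
    (h : ∀ i j, |A i j| ≤ c) : frobNorm A ≤ q * c := by
  have h1 : frobNorm A ≤ Real.sqrt (∑ i : Fin q, ∑ j : Fin q, c ^ 2) := by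
    apply Real.sqrt_le_sqrt
    apply Finset.sum_le_sum; intro i _
    apply Finset.sum_le_sum; intro j _
    exact sq_le_sq' (abs_le.1 (h i j)).1 (abs_le.1 (h i j)).2
  calc frobNorm A ≤ _ := h1
    _ = q * c := by
      rw [Finset.sum_const, Finset.sum_const]
      simp only [Finset.card_univ, Fintype.card_fin, nsmul_eq_mul]
      rw [show (q:ℝ) * ((q:ℝ) * c^2) = (q*c)^2 by ring, Real.sqrt_sq (by positivity)]

theorem rpow_inv_rpow' {x ν : ℝ} (hx : 0 ≤ x) (hν : ν ≠ 0) : (x ^ (1/ν)) ^ ν = x := by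
  rw [← Real.rpow_mul hx, one_div, inv_mul_cancel₀ hν, Real.rpow_one]

theorem holder_contOn {g : ℝ → ℝ} {a b H ν : ℝ} (hν : 0 < ν) (hH : 0 ≤ H)
    (h : ∀ x ∈ Set.Icc a b, ∀ x' ∈ Set.Icc a b, |g x - g x'| ≤ H * |x - x'| ^ ν) :
    ContinuousOn g (Set.Icc a b) := by
  intro x hx
  rw [Metric.continuousWithinAt_iff]
  intro ε hε
  refine ⟨(ε / (H + 1)) ^ (1/ν), Real.rpow_pos_of_pos (by positivity) _, fun y hy hd => ?_⟩
  have h1 : |g y - g x| ≤ H * |y - x| ^ ν := h y hy x hx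
  have h2 : |y - x| ^ ν ≤ ((ε / (H + 1)) ^ (1/ν)) ^ ν := by
    apply Real.rpow_le_rpow (abs_nonneg _) _ hν.le
    rw [Real.dist_eq] at hd; exact hd.le
  have h3 : ((ε / (H + 1)) ^ (1/ν) : ℝ) ^ ν = ε / (H + 1) := rpow_inv_rpow' (by positivity) hν.ne'
  rw [Real.dist_eq]
  have : H * (ε / (H+1)) < ε := by
    rw [mul_div_assoc', div_lt_iff₀ (by positivity)]
    nlinarith
  calc |g y - g x| ≤ H * |y - x| ^ ν := h1
    _ ≤ H * (ε / (H+1)) := by rw [← h3]; exact mul_le_mul_of_nonneg_left h2 hH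
    _ < ε := this

open Matrix in
theorem isOpen_PD (q : ℕ) (hq : 0 < q) : IsOpen {M : SymMat q | M.1.PosDef} := by
  rw [isOpen_iff_mem_nhds]
  rintro M₀ hM₀
  -- the unit sphere for the euclidean quadratic form
  set K : Set (Fin q → ℝ) := {x | ∑ i, (x i)^2 = 1} with hK
  have hKc : IsCompact K := by
    have hcl : IsClosed K := isClosed_eq (by fun_prop) continuous_const
    have hbd : Bornology.IsBounded K := by
      apply (Metric.isBounded_iff_subset_closedBall 0).2
      refine ⟨1, fun x hx => ?_⟩
      simp only [Metric.mem_closedBall, dist_zero_right]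
      rw [pi_norm_le_iff_of_nonneg (by norm_num)]
      intro i
      rw [Real.norm_eq_abs, abs_le]
      have hx' : ∑ i, (x i)^2 = 1 := hx
      constructor <;> nlinarith [hx', Finset.single_le_sum (f := fun i => (x i)^2)
        (fun i _ => sq_nonneg (x i)) (Finset.mem_univ i), sq_nonneg (x i)]
    exact Metric.isCompact_of_isClosed_isBounded hcl hbd
  have hKne : K.Nonempty := by
    refine ⟨Pi.single ⟨0, hq⟩ 1, ?_⟩
    simp [hK, Pi.single_apply]
  set g : (Fin q → ℝ) → ℝ := fun x => ∑ i, ∑ j, x i * (M₀.1 i j * x j) with hg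
  have hgc : Continuous g := by fun_prop
  obtain ⟨x₀, hx₀K, hmin⟩ := hKc.exists_isMinOn hKne hgc.continuousOn
  have hgdot : ∀ x : Fin q → ℝ, g x = x ⬝ᵥ (M₀.1 *ᵥ x) := by
    intro x; simp [hg, dotProduct, Matrix.mulVec, Finset.mul_sum]
  have hx₀ne : x₀ ≠ 0 := by
    intro h; rw [hK] at hx₀K; simp [h] at hx₀K
  have hc : 0 < g x₀ := by
    rw [hgdot]
    have := hM₀.dotProduct_mulVec_pos hx₀ne
    simpa using this
  set c := g x₀
  set η := c / (2 * q) with hη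
  have hq0 : (0:ℝ) < q := by exact_mod_cast hq
  have hηpos : 0 < η := div_pos hc (by linarith)
  -- neighborhood
  have hsub : {M : SymMat q | ∀ i k, |M.1 i k - M₀.1 i k| < η} ⊆ {M : SymMat q | M.1.PosDef} := by
    intro M hM
    refine Matrix.PosDef.of_dotProduct_mulVec_pos ?_ ?_
    · rw [Matrix.IsHermitian]; simpa using M.2.eq
    · intro x hx
      have hxR : x ≠ (0 : Fin q → ℝ) := hx
      -- normalize
      set r := Real.sqrt (∑ i, (x i)^2) with hr
      have hsum_pos : 0 < ∑ i, (x i)^2 := by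
        rcases Function.ne_iff.1 hxR with ⟨i, hi⟩
        have : 0 < (x i)^2 := by have := abs_pos.2 hi; nlinarith [this, sq_abs (x i)]
        exact lt_of_lt_of_le this (Finset.single_le_sum (fun i _ => sq_nonneg (x i)) (Finset.mem_univ i))
      have hrpos : 0 < r := Real.sqrt_pos.2 hsum_pos
      set u := r⁻¹ • x with hu
      have huK : u ∈ K := by
        rw [hK]
        simp only [hu, Pi.smul_apply, smul_eq_mul, Set.mem_setOf_eq, mul_pow, ← Finset.mul_sum]
        rw [show (r⁻¹)^2 = (r^2)⁻¹ by ring, hr, Real.sq_sqrt hsum_pos.le]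
        exact inv_mul_cancel₀ hsum_pos.ne'
      -- quadratic form at u
      have key : 0 < u ⬝ᵥ (M.1 *ᵥ u) := by
        have hdiff : |∑ i, ∑ k, u i * ((M.1 i k - M₀.1 i k) * u k)| ≤ η * q := by
          calc |∑ i, ∑ k, u i * ((M.1 i k - M₀.1 i k) * u k)|
              ≤ ∑ i, |∑ k, u i * ((M.1 i k - M₀.1 i k) * u k)| := Finset.abs_sum_le_sum_abs _ _
            _ ≤ ∑ i, ∑ k, |u i * ((M.1 i k - M₀.1 i k) * u k)| := by
                exact Finset.sum_le_sum fun i _ => Finset.abs_sum_le_sum_abs _ _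
            _ ≤ ∑ i, ∑ k, |u i| * (η * |u k|) := by
                apply Finset.sum_le_sum; intro i _
                apply Finset.sum_le_sum; intro k _
                rw [abs_mul, abs_mul]
                exact mul_le_mul_of_nonneg_left
                  (mul_le_mul_of_nonneg_right (hM i k).le (abs_nonneg _)) (abs_nonneg _)
            _ = η * (∑ i, |u i|)^2 := by
                simp only [← Finset.mul_sum, ← Finset.sum_mul]
                ring
            _ ≤ η * (q * ∑ i, (|u i|)^2) := by
                gcongr
                exact_mod_cast sq_sum_le_card_mul_sum_sq (s := Finset.univ) (f := fun i => |u i|) |>.trans (by simp)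
            _ = η * q := by
                rw [hK] at huK
                simp only [sq_abs]
                rw [huK, mul_one]
        have hmin' : c ≤ ∑ i, ∑ j, u i * (M₀.1 i j * u j) := hmin huK
        have hexpand : u ⬝ᵥ (M.1 *ᵥ u)
            = (∑ i, ∑ j, u i * (M₀.1 i j * u j)) + ∑ i, ∑ k, u i * ((M.1 i k - M₀.1 i k) * u k) := by
          simp only [dotProduct, Matrix.mulVec, Finset.mul_sum, ← Finset.sum_add_distrib]
          congr 1; ext i; congr 1; ext k; ring
        have hq1 : (1:ℝ) ≤ q := by exact_mod_cast hq
        have : η * q = c/2 := by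
          rw [hη]; field_simp
        nlinarith [abs_le.1 hdiff]
      -- scale back
      have hxu : x = r • u := by
        rw [hu, smul_smul, mul_inv_cancel₀ hrpos.ne', one_smul]
      have : x ⬝ᵥ (M.1 *ᵥ x) = r^2 * (u ⬝ᵥ (M.1 *ᵥ u)) := by
        rw [hxu]
        simp [Matrix.mulVec_smul, dotProduct_smul, smul_dotProduct]; ring
      have hpos : 0 < x ⬝ᵥ (M.1 *ᵥ x) := by rw [this]; positivity
      simpa using hpos
  refine Filter.mem_of_superset ?_ hsub
  have : IsOpen {M : SymMat q | ∀ i k, |M.1 i k - M₀.1 i k| < η} := by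
    have : {M : SymMat q | ∀ i k, |M.1 i k - M₀.1 i k| < η}
        = ⋂ i, ⋂ k, {M : SymMat q | |M.1 i k - M₀.1 i k| < η} := by
      ext M; simp
    rw [this]
    apply isOpen_iInter_of_finite; intro i
    apply isOpen_iInter_of_finite; intro k
    have hcont : Continuous (fun M : SymMat q => |M.1 i k - M₀.1 i k|) := by
      apply Continuous.abs
      exact ((continuous_apply k).comp ((continuous_apply i).comp (continuous_subtype_val : Continuous (fun M : SymMat q => M.1)))).sub continuous_const
    exact isOpen_lt hcont continuous_const
  exact this.mem_nhds (by simp [hηpos])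

set_option maxHeartbeats 1000000 in
theorem good_nonempty (ν : ℝ) (hν0 : 0 < ν) (a b : ℝ) (hab : a < b) (q : ℕ) (hq : 0 < q)
    (Ω : ℝ → Matrix (Fin q) (Fin q) ℝ)
    (hpd : ∀ x ∈ Set.Icc a b, (Ω x).PosDef) (H₀ : ℝ) (hH₀ : 0 ≤ H₀)
    (hhold : ∀ (i k : Fin q), ∀ x ∈ Set.Icc a b, ∀ x' ∈ Set.Icc a b,
      |Ω x i k - Ω x' i k| ≤ H₀ * |x - x'| ^ ν)
    (ε : ℝ) (hε : 0 < ε) :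
    ∃ N : ℕ, 0 < N ∧ (goodParams a b q N Ω ε).Nonempty := by
  have hba : 0 < b - a := sub_pos.2 hab
  have hq0 : (0:ℝ) < q := by exact_mod_cast hq
  obtain ⟨K, hKdef, hK⟩ : ∃ K : ℝ, K = q * (b - a) * (H₀ + 1) ∧ 0 < K :=
    ⟨_, rfl, by positivity⟩
  obtain ⟨T, hTdef, hT⟩ : ∃ T : ℝ, T = (ε / (2*K)) ^ (1/ν) ∧ 0 < T :=
    ⟨_, rfl, Real.rpow_pos_of_pos (by positivity) _⟩
  have hTν : T ^ ν = ε / (2*K) := by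
    rw [hTdef, ← Real.rpow_mul (by positivity), one_div, inv_mul_cancel₀ hν0.ne', Real.rpow_one]
  obtain ⟨N, hNgt⟩ := exists_nat_gt ((b - a)/T)
  have hNR : (0:ℝ) < N := lt_trans (by positivity) hNgt
  have hN : 0 < N := by exact_mod_cast hNR
  refine ⟨N, hN, ?_⟩
  obtain ⟨δ, hδdef, hδpos⟩ : ∃ δ : ℝ, δ = (b - a)/N ∧ 0 < δ := ⟨_, rfl, by positivity⟩
  have hδT : δ < T := by
    rw [hδdef, div_lt_iff₀ hNR]
    calc b - a = (b-a)/T * T := by field_simp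
      _ < N * T := mul_lt_mul_of_pos_right hNgt hT
      _ = T * N := by ring
  obtain ⟨c, hcdef, hc⟩ : ∃ c : ℝ, c = T^2 - δ^2/4 ∧ 0 < c := ⟨_, rfl, by nlinarith⟩
  have hbaν : (0:ℝ) < (b - a) ^ ν := Real.rpow_pos_of_pos hba _
  obtain ⟨P, hPdef, hP⟩ : ∃ P : ℝ, P = N * (b - a) ^ ν ∧ 0 < P := ⟨_, rfl, by positivity⟩
  obtain ⟨η, hηdef, hη⟩ : ∃ η : ℝ, η = ε / (2*K*(P+1)) ∧ 0 < η := ⟨_, rfl, by positivity⟩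
  obtain ⟨Mx, hMxdef, hMx1⟩ : ∃ Mx : ℝ, Mx = max (-Real.log η) 1 ∧ 1 ≤ Mx :=
    ⟨_, rfl, le_max_right _ _⟩
  have hMx : 0 < Mx := lt_of_lt_of_le one_pos hMx1
  obtain ⟨s, hsdef, hs⟩ : ∃ s : ℝ, s = c / (2*Mx) ∧ 0 < s := ⟨_, rfl, by positivity⟩
  obtain ⟨E, hEdef, hEpos⟩ : ∃ E : ℝ, E = Real.exp (-c/(2*s)) ∧ 0 < E :=
    ⟨_, rfl, Real.exp_pos _⟩
  have hcs : c/(2*s) = Mx := by rw [hsdef]; field_simp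
  have hE : E ≤ η := by
    rw [hEdef, neg_div, hcs]
    have h1 : -Real.log η ≤ Mx := hMxdef ▸ le_max_left _ _
    calc Real.exp (-Mx) ≤ Real.exp (Real.log η) := Real.exp_le_exp.2 (by linarith)
      _ = η := Real.exp_log hη
  -- centers
  obtain ⟨μ, hμdef⟩ : ∃ μ : Fin N → ℝ, μ = fun j : Fin N => a + ((j:ℝ) + 1/2) * δ := ⟨_, rfl⟩
  have hNδ : (N:ℝ) * δ = b - a := by rw [hδdef]; field_simp
  have hμmem : ∀ j, μ j ∈ Set.Icc a b := by
    intro j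
    have hj : (j:ℝ) + 1 ≤ N := by exact_mod_cast j.2
    rw [hμdef]
    constructor
    · have : 0 ≤ ((j:ℝ) + 1/2) * δ := by positivity
      simp only; linarith
    · simp only
      have h2 : ((j:ℝ) + 1/2) * δ ≤ (N:ℝ) * δ := by
        apply mul_le_mul_of_nonneg_right _ hδpos.le; linarith
      linarith [h2.trans_eq hNδ]
  have hsymm : ∀ j, (Ω (μ j)).IsSymm := by
    intro j
    have := (hpd (μ j) (hμmem j)).1
    rw [Matrix.IsHermitian] at this; simpa [Matrix.IsSymm] using this
  -- nearest center
  have hnear : ∀ x ∈ Set.Ioc a b, ∃ j₀ : Fin N, |x - μ j₀| ≤ δ/2 := by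
    intro x hx
    obtain ⟨t, htdef⟩ : ∃ t : ℝ, t = (x - a)/δ := ⟨_, rfl⟩
    have ht0 : 0 < t := by
      have : 0 < x - a := sub_pos.2 hx.1
      rw [htdef]; positivity
    have htN : t ≤ N := by
      rw [htdef, div_le_iff₀ hδpos, mul_comm]
      linarith [hNδ, hx.2]
    obtain ⟨m, hmdef⟩ : ∃ m : ℤ, m = ⌈t⌉ := ⟨_, rfl⟩
    have hm1 : 1 ≤ m := by
      have : 0 < (⌈t⌉ : ℤ) := Int.ceil_pos.2 ht0
      omega
    have hmN : m ≤ (N:ℤ) := hmdef ▸ Int.ceil_le.2 (by exact_mod_cast htN)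
    have hn1 : 1 ≤ m.toNat := by omega
    have hnN : m.toNat ≤ N := by omega
    refine ⟨⟨m.toNat - 1, by omega⟩, ?_⟩
    have hcast : ((m.toNat - 1 : ℕ) : ℝ) = (m:ℝ) - 1 := by
      have h1 : ((m.toNat - 1 : ℕ) : ℤ) = m - 1 := by omega
      exact_mod_cast congrArg (fun z : ℤ => (z : ℝ)) h1
    have hxa : x - a = t * δ := by rw [htdef]; field_simp
    have hμj : x - μ ⟨m.toNat - 1, by omega⟩ = (t - (m:ℝ) + 1/2) * δ := by
      rw [hμdef]
      simp only [hcast]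
      linarith [hxa]
    rw [hμj, abs_mul, abs_of_pos hδpos]
    have h1 : t ≤ (m:ℝ) := hmdef ▸ Int.le_ceil t
    have h2 : (m:ℝ) < t + 1 := hmdef ▸ Int.ceil_lt_add_one t
    have h3 : |t - (m:ℝ) + 1/2| ≤ 1/2 := abs_le.2 ⟨by linarith, by linarith⟩
    calc |t - (m:ℝ) + 1/2| * δ ≤ (1/2) * δ := mul_le_mul_of_nonneg_right h3 hδpos.le
      _ = δ/2 := by ring
  -- pointwise bound
  have hTν0 : 0 ≤ T ^ ν := (Real.rpow_pos_of_pos hT ν).le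
  have hinn : 0 ≤ H₀ * (T ^ ν + N * E * (b-a)^ν) := by positivity
  obtain ⟨C, hCdef, hC0⟩ : ∃ C : ℝ, C = q * (H₀ * (T ^ ν + N * E * (b-a)^ν)) ∧ 0 ≤ C :=
    ⟨_, rfl, by positivity⟩
  have hpt : ∀ x ∈ Set.Ioc a b,
      frobNorm (Ω x - ∑ j : Fin N, (smw μ s x j) • Ω (μ j)) ≤ C := by
    intro x hx
    have hxI : x ∈ Set.Icc a b := Set.Ioc_subset_Icc_self hx
    obtain ⟨j₀, hj₀⟩ := hnear x hx
    have hfar : ∀ j : Fin N, T < |x - μ j| → smw μ s x j ≤ E := by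
      intro j hTj
      have h1 := smw_le hN μ s x j j₀
      have ha : (x - μ j₀)^2 ≤ (δ/2)^2 := sq_le_sq' (by linarith [(abs_le.1 hj₀).1]) (abs_le.1 hj₀).2
      have hb : T^2 < (x - μ j)^2 := by
        rw [← sq_abs (x - μ j), sq, sq]
        exact mul_self_lt_mul_self hT.le hTj
      have hnum : -(x - μ j)^2 + (x - μ j₀)^2 ≤ -c := by
        have hδ4 : (δ/2)^2 = δ^2/4 := by ring
        rw [hcdef]; linarith
      have h3 : (-(x - μ j)^2 + (x - μ j₀)^2)/(2*s) ≤ -c/(2*s) :=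
        (div_le_div_iff_of_pos_right (by positivity)).2 hnum
      calc smw μ s x j ≤ _ := h1
        _ ≤ Real.exp (-c/(2*s)) := Real.exp_le_exp.2 h3
        _ = E := hEdef.symm
    have hterm : ∀ j : Fin N, smw μ s x j * |x - μ j| ^ ν
        ≤ smw μ s x j * T ^ ν + E * (b-a)^ν := by
      intro j
      rcases le_or_gt (|x - μ j|) T with hle | hgt
      · have h1 : |x - μ j| ^ ν ≤ T ^ ν := Real.rpow_le_rpow (abs_nonneg _) hle hν0.le
        have h2 : 0 ≤ E * (b-a)^ν := by positivity
        linarith [mul_le_mul_of_nonneg_left h1 (smw_nonneg hN μ s x j)]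
      · have h1 : |x - μ j| ≤ b - a := by
          have h2 := hμmem j
          rw [abs_le]
          constructor
          · linarith [hxI.1, h2.2]
          · linarith [hxI.2, h2.1]
        have h2 : |x - μ j| ^ ν ≤ (b-a)^ν := Real.rpow_le_rpow (abs_nonneg _) h1 hν0.le
        have h3 : smw μ s x j ≤ E := hfar j hgt
        have h5 : 0 ≤ smw μ s x j * T ^ ν := mul_nonneg (smw_nonneg hN μ s x j) hTν0
        calc smw μ s x j * |x - μ j| ^ ν ≤ E * (b-a)^ν :=
              mul_le_mul h3 h2 (Real.rpow_nonneg (abs_nonneg _) ν) hEpos.le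
          _ ≤ smw μ s x j * T ^ ν + E * (b-a)^ν := by linarith
    have hkey : ∑ j, smw μ s x j * |x - μ j| ^ ν ≤ T ^ ν + N * E * (b-a)^ν := by
      calc ∑ j, smw μ s x j * |x - μ j| ^ ν
          ≤ ∑ j : Fin N, (smw μ s x j * T ^ ν + E * (b-a)^ν) :=
            Finset.sum_le_sum (fun j _ => hterm j)
        _ = (∑ j, smw μ s x j) * T ^ ν + N * (E * (b-a)^ν) := by
            rw [Finset.sum_add_distrib, ← Finset.sum_mul, Finset.sum_const]
            simp [Finset.card_univ]
        _ = T ^ ν + N * E * (b-a)^ν := by rw [smw_sum hN]; ring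
    rw [hCdef]
    apply frobNorm_le _ _ hinn
    intro i k
    have hentry : (Ω x - ∑ j : Fin N, (smw μ s x j) • Ω (μ j)) i k
        = ∑ j, smw μ s x j * (Ω x i k - Ω (μ j) i k) := by
      simp only [Matrix.sub_apply, Matrix.sum_apply, Matrix.smul_apply, smul_eq_mul]
      simp only [mul_sub]
      rw [Finset.sum_sub_distrib, ← Finset.sum_mul, smw_sum hN, one_mul]
    rw [hentry]
    calc |∑ j, smw μ s x j * (Ω x i k - Ω (μ j) i k)|
        ≤ ∑ j, |smw μ s x j * (Ω x i k - Ω (μ j) i k)| := Finset.abs_sum_le_sum_abs _ _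
      _ ≤ ∑ j, smw μ s x j * (H₀ * |x - μ j| ^ ν) := by
          apply Finset.sum_le_sum; intro j _
          rw [abs_mul, abs_of_nonneg (smw_nonneg hN μ s x j)]
          exact mul_le_mul_of_nonneg_left (hhold i k x hxI (μ j) (hμmem j)) (smw_nonneg hN μ s x j)
      _ = H₀ * ∑ j, smw μ s x j * |x - μ j| ^ ν := by
          rw [Finset.mul_sum]; congr 1; ext j; ring
      _ ≤ H₀ * (T ^ ν + N * E * (b-a)^ν) := mul_le_mul_of_nonneg_left hkey hH₀
  -- conclude integral bound
  have hCε : C * (b - a) < ε := by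
    have hKT : K * T ^ ν = ε/2 := by rw [hTν]; field_simp
    have h1 : K * P * η = ε/2 * (P/(P+1)) := by rw [hηdef]; field_simp
    have h2 : P/(P+1) < 1 := (div_lt_one (by linarith)).2 (by linarith)
    have h3 : K * P * η < ε/2 := by
      rw [h1]
      have h2' := mul_lt_mul_of_pos_left h2 (show (0:ℝ) < ε/2 by linarith)
      rw [mul_one] at h2'
      linarith
    have h4 : K * P * E ≤ K * P * η := mul_le_mul_of_nonneg_left hE (by positivity)
    have h5 : C * (b - a) ≤ K * T ^ ν + K * P * E := by
      have e1 : C * (b-a) = ((q:ℝ)*(b-a)*H₀) * T^ν + ((q:ℝ)*(b-a)*H₀) * ((N:ℝ)*(b-a)^ν) * E := by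
        rw [hCdef]; ring
      have e2 : ((q:ℝ)*(b-a)*H₀) ≤ K := by
        rw [hKdef]
        have := mul_pos hq0 hba
        nlinarith
      have e3 : ((q:ℝ)*(b-a)*H₀) * T^ν ≤ K * T^ν := mul_le_mul_of_nonneg_right e2 hTν0
      have e4 : ((q:ℝ)*(b-a)*H₀) * ((N:ℝ)*(b-a)^ν) * E ≤ K * P * E := by
        rw [hPdef]
        exact mul_le_mul_of_nonneg_right
          (mul_le_mul_of_nonneg_right e2 (by positivity)) hEpos.le
      linarith
    linarith
  have hint : (∫ x in Set.Ioc a b,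
      frobNorm (Ω x - ∑ j : Fin N, (smw μ s x j) • Ω (μ j))) < ε := by
    by_cases hInt : Integrable (fun x => frobNorm (Ω x - ∑ j : Fin N, (smw μ s x j) • Ω (μ j)))
        (volume.restrict (Set.Ioc a b))
    · have hle : (fun x => frobNorm (Ω x - ∑ j : Fin N, (smw μ s x j) • Ω (μ j)))
          ≤ᵐ[volume.restrict (Set.Ioc a b)] fun _ => C := by
        rw [Filter.EventuallyLE, ae_restrict_iff' measurableSet_Ioc]
        exact ae_of_all _ (fun x hx => hpt x hx)
      have h1 := integral_mono_ae hInt (integrable_const C) hle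
      have h2 : (∫ _ in Set.Ioc a b, C) = (b - a) * C := by
        rw [setIntegral_const, Real.volume_real_Ioc_of_le hab.le, smul_eq_mul]
      calc (∫ x in Set.Ioc a b, frobNorm (Ω x - ∑ j : Fin N, (smw μ s x j) • Ω (μ j)))
          ≤ (b-a) * C := h2 ▸ h1
        _ = C * (b-a) := by ring
        _ < ε := hCε
    · rw [integral_undef hInt]; exact hε
  refine ⟨⟨μ, s, fun j => ⟨Ω (μ j), hsymm j⟩⟩, hs, fun j => hpd (μ j) (hμmem j), ?_⟩
  show (∫ x in Set.Ioc a b,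
      frobNorm (Ω x - ∑ j : Fin N,
        (Real.exp (-(x - μ j) ^ 2 / (2 * s)) /
          ∑ t : Fin N, Real.exp (-(x - μ t) ^ 2 / (2 * s))) • Ω (μ j))) < ε
  have hsmw : ∀ (x : ℝ) (j : Fin N), Real.exp (-(x - μ j) ^ 2 / (2 * s)) /
      (∑ t : Fin N, Real.exp (-(x - μ t) ^ 2 / (2 * s))) = smw μ s x j := fun _ _ => rfl
  simp only [hsmw]
  exact hint

theorem frobNorm_eq {q : ℕ} {N : ℕ} (Ωx : Matrix (Fin q) (Fin q) ℝ)
    (w : Fin N → ℝ) (Mj : Fin N → Matrix (Fin q) (Fin q) ℝ) :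
    frobNorm (Ωx - ∑ j : Fin N, w j • Mj j)
      = Real.sqrt (∑ i, ∑ k, (Ωx i k - ∑ j, w j * Mj j i k)^2) := by
  unfold frobNorm
  congr 1
  apply Finset.sum_congr rfl; intro i _
  apply Finset.sum_congr rfl; intro k _
  congr 1
  simp [Matrix.sub_apply, Matrix.sum_apply, Matrix.smul_apply, smul_eq_mul]

set_option maxHeartbeats 1000000 in
theorem good_isOpen (a b : ℝ) (hab : a < b) (q N : ℕ) (hq : 0 < q) (hN : 0 < N)
    (Ω : ℝ → Matrix (Fin q) (Fin q) ℝ) (M₀ : ℝ) (hM₀ : 0 ≤ M₀)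
    (hΩc : ∀ i k : Fin q, ContinuousOn (fun x => Ω x i k) (Set.Icc a b))
    (hΩb : ∀ x ∈ Set.Icc a b, ∀ i k : Fin q, |Ω x i k| ≤ M₀)
    (ε : ℝ) (hPDopen : IsOpen {M : SymMat q | M.1.PosDef}) :
    IsOpen (goodParams a b q N Ω ε) := by
  classical
  set I : ((Fin N → ℝ) × ℝ × (Fin N → SymMat q)) → ℝ := fun θ => ∫ x in Set.Ioc a b,
      frobNorm (Ω x - ∑ j : Fin N, (smw θ.1 θ.2.1 x j) • (θ.2.2 j).1) with hIdef
  have hA : IsOpen {θ : (Fin N → ℝ) × ℝ × (Fin N → SymMat q) | 0 < θ.2.1} :=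
    isOpen_lt continuous_const (continuous_fst.comp continuous_snd)
  have hB : IsOpen {θ : (Fin N → ℝ) × ℝ × (Fin N → SymMat q) | ∀ j, (θ.2.2 j).1.PosDef} := by
    have : {θ : (Fin N → ℝ) × ℝ × (Fin N → SymMat q) | ∀ j, (θ.2.2 j).1.PosDef}
        = ⋂ j, (fun θ : (Fin N → ℝ) × ℝ × (Fin N → SymMat q) => θ.2.2 j) ⁻¹' {M : SymMat q | M.1.PosDef} := by
      ext θ; simp
    rw [this]
    apply isOpen_iInter_of_finite
    intro j
    exact hPDopen.preimage ((continuous_apply j).comp (continuous_snd.comp continuous_snd))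
  -- continuity of the integral on A
  have hIcont : ContinuousOn I {θ : (Fin N → ℝ) × ℝ × (Fin N → SymMat q) | 0 < θ.2.1} := by
    intro θ₀ hθ₀
    apply ContinuousAt.continuousWithinAt
    set R : ℝ := (∑ j : Fin N, ∑ i : Fin q, ∑ k : Fin q, |((θ₀.2.2 j).1) i k|) + 1 with hRdef
    have hR1 : ∀ j i k, |((θ₀.2.2 j).1) i k| < R := by
      intro j i k
      have h1 : |((θ₀.2.2 j).1) i k| ≤ ∑ k', |((θ₀.2.2 j).1) i k'| :=
        Finset.single_le_sum (f := fun k' => |((θ₀.2.2 j).1) i k'|)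
          (fun k' _ => abs_nonneg _) (Finset.mem_univ k)
      have h2 : (∑ k', |((θ₀.2.2 j).1) i k'|) ≤ ∑ i', ∑ k', |((θ₀.2.2 j).1) i' k'| :=
        Finset.single_le_sum (f := fun i' => ∑ k', |((θ₀.2.2 j).1) i' k'|)
          (fun i' _ => Finset.sum_nonneg (fun _ _ => abs_nonneg _)) (Finset.mem_univ i)
      have h3 : (∑ i', ∑ k', |((θ₀.2.2 j).1) i' k'|)
          ≤ ∑ j', ∑ i', ∑ k', |((θ₀.2.2 j').1) i' k'| :=
        Finset.single_le_sum (f := fun j' => ∑ i', ∑ k', |((θ₀.2.2 j').1) i' k'|)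
          (fun j' _ => Finset.sum_nonneg fun _ _ => Finset.sum_nonneg (fun _ _ => abs_nonneg _))
          (Finset.mem_univ j)
      rw [hRdef]; linarith
    have hRpos : 0 < R := lt_of_le_of_lt (abs_nonneg _) (hR1 ⟨0, hN⟩ ⟨0, hq⟩ ⟨0, hq⟩)
    set W : Set ((Fin N → ℝ) × ℝ × (Fin N → SymMat q)) := {θ : (Fin N → ℝ) × ℝ × (Fin N → SymMat q) | ∀ j i k, |((θ.2.2 j).1) i k| < R} with hWdef
    have hWopen : IsOpen W := by
      have : W = ⋂ j, ⋂ i, ⋂ k, {θ : (Fin N → ℝ) × ℝ × (Fin N → SymMat q) | |((θ.2.2 j).1) i k| < R} := by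
        ext θ; simp [hWdef]
      rw [this]
      refine isOpen_iInter_of_finite fun j => isOpen_iInter_of_finite fun i =>
        isOpen_iInter_of_finite fun k => ?_
      apply isOpen_lt _ continuous_const
      exact ((continuous_apply k).comp ((continuous_apply i).comp
        ((continuous_subtype_val : Continuous (fun M : SymMat q => M.1)).comp ((continuous_apply j).comp
          (continuous_snd.comp continuous_snd))))).abs
    have hWnhds : W ∈ nhds θ₀ := hWopen.mem_nhds (fun j i k => hR1 j i k)
    have hs₀ : (0:ℝ) < θ₀.2.1 := hθ₀
    apply continuousAt_of_dominated (bound := fun _ => (q:ℝ) * (M₀ + R))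
    · apply Filter.Eventually.of_forall
      intro θ
      apply ContinuousOn.aestronglyMeasurable _ measurableSet_Ioc
      have heq : ∀ x : ℝ, frobNorm (Ω x - ∑ j : Fin N, (smw θ.1 θ.2.1 x j) • (θ.2.2 j).1)
          = Real.sqrt (∑ i, ∑ k, (Ω x i k - ∑ j, smw θ.1 θ.2.1 x j * ((θ.2.2 j).1) i k)^2) :=
        fun x => frobNorm_eq _ _ _
      simp only [heq]
      apply Real.continuous_sqrt.comp_continuousOn
      apply continuousOn_finset_sum; intro i _
      apply continuousOn_finset_sum; intro k _
      apply ContinuousOn.pow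
      apply ContinuousOn.sub ((hΩc i k).mono Set.Ioc_subset_Icc_self)
      apply continuousOn_finset_sum; intro j _
      apply ContinuousOn.mul _ continuousOn_const
      have hwc : Continuous (fun x => smw θ.1 θ.2.1 x j) := by
        unfold smw
        apply Continuous.div
        · fun_prop
        · fun_prop
        · intro x; exact (smw_denom_pos hN θ.1 θ.2.1 x).ne'
      exact hwc.continuousOn
    · filter_upwards [hWnhds] with θ hθW
      rw [ae_restrict_iff' measurableSet_Ioc]
      apply ae_of_all
      intro x hx
      have hxI : x ∈ Set.Icc a b := Set.Ioc_subset_Icc_self hx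
      rw [Real.norm_eq_abs, abs_of_nonneg (by unfold frobNorm; exact Real.sqrt_nonneg _)]
      apply frobNorm_le _ _ (by linarith)
      intro i k
      have h1 : |(∑ j : Fin N, (smw θ.1 θ.2.1 x j) • (θ.2.2 j).1) i k| ≤ R := by
        have : (∑ j : Fin N, (smw θ.1 θ.2.1 x j) • (θ.2.2 j).1) i k
            = ∑ j, smw θ.1 θ.2.1 x j * ((θ.2.2 j).1) i k := by
          simp [Matrix.sum_apply, Matrix.smul_apply, smul_eq_mul]
        rw [this]
        calc |∑ j, smw θ.1 θ.2.1 x j * ((θ.2.2 j).1) i k|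
            ≤ ∑ j, |smw θ.1 θ.2.1 x j * ((θ.2.2 j).1) i k| := Finset.abs_sum_le_sum_abs _ _
          _ ≤ ∑ j, smw θ.1 θ.2.1 x j * R := by
              apply Finset.sum_le_sum; intro j _
              rw [abs_mul, abs_of_nonneg (smw_nonneg hN _ _ x j)]
              exact mul_le_mul_of_nonneg_left (hθW j i k).le (smw_nonneg hN _ _ x j)
          _ = R := by rw [← Finset.sum_mul, smw_sum hN, one_mul]
      have h2 : |Ω x i k| ≤ M₀ := hΩb x hxI i k
      have h3 : (Ω x - ∑ j : Fin N, (smw θ.1 θ.2.1 x j) • (θ.2.2 j).1) i k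
          = Ω x i k - (∑ j : Fin N, (smw θ.1 θ.2.1 x j) • (θ.2.2 j).1) i k := by
        simp [Matrix.sub_apply]
      rw [h3]
      calc |Ω x i k - (∑ j : Fin N, (smw θ.1 θ.2.1 x j) • (θ.2.2 j).1) i k|
          ≤ |Ω x i k| + |(∑ j : Fin N, (smw θ.1 θ.2.1 x j) • (θ.2.2 j).1) i k| := abs_sub _ _
        _ ≤ M₀ + R := add_le_add h2 h1
    · exact integrable_const _
    · apply ae_of_all
      intro x
      have heq : (fun θ : (Fin N → ℝ) × ℝ × (Fin N → SymMat q) => frobNorm (Ω x - ∑ j : Fin N, (smw θ.1 θ.2.1 x j) • (θ.2.2 j).1))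
          = fun θ : (Fin N → ℝ) × ℝ × (Fin N → SymMat q) => Real.sqrt (∑ i, ∑ k,
              (Ω x i k - ∑ j, smw θ.1 θ.2.1 x j * ((θ.2.2 j).1) i k)^2) := by
        funext θ; exact frobNorm_eq _ _ _
      show ContinuousAt (fun θ : (Fin N → ℝ) × ℝ × (Fin N → SymMat q) => frobNorm (Ω x - ∑ j : Fin N, (smw θ.1 θ.2.1 x j) • (θ.2.2 j).1)) θ₀
      rw [heq]
      apply Real.continuous_sqrt.continuousAt.comp
      apply tendsto_finset_sum; intro i _
      apply tendsto_finset_sum; intro k _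
      apply ContinuousAt.pow
      apply ContinuousAt.sub continuousAt_const
      apply tendsto_finset_sum; intro j _
      apply ContinuousAt.mul
      · have hden : ContinuousAt (fun θ : (Fin N → ℝ) × ℝ × (Fin N → SymMat q) =>
            ∑ t : Fin N, Real.exp (-(x - θ.1 t) ^ 2 / (2 * θ.2.1))) θ₀ := by
          apply tendsto_finset_sum; intro t _
          apply Real.continuous_exp.continuousAt.comp
          apply ContinuousAt.div (by fun_prop) (by fun_prop)
          exact (mul_pos two_pos hs₀).ne'
        have hnum : ContinuousAt (fun θ : (Fin N → ℝ) × ℝ × (Fin N → SymMat q) => Real.exp (-(x - θ.1 j) ^ 2 / (2 * θ.2.1))) θ₀ := by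
          apply Real.continuous_exp.continuousAt.comp
          apply ContinuousAt.div (by fun_prop) (by fun_prop)
          exact (mul_pos two_pos hs₀).ne'
        have hden0 : (∑ t : Fin N, Real.exp (-(x - θ₀.1 t) ^ 2 / (2 * θ₀.2.1))) ≠ 0 :=
          (smw_denom_pos hN θ₀.1 θ₀.2.1 x).ne'
        exact ContinuousAt.div hnum hden hden0
      · exact ((continuous_apply k).comp ((continuous_apply i).comp
          ((continuous_subtype_val : Continuous (fun M : SymMat q => M.1)).comp ((continuous_apply j).comp
            (continuous_snd.comp continuous_snd))))).continuousAt
  -- assemble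
  have hset : goodParams a b q N Ω ε
      = ({θ : (Fin N → ℝ) × ℝ × (Fin N → SymMat q) | 0 < θ.2.1} ∩ I ⁻¹' (Set.Iio ε)) ∩ {θ : (Fin N → ℝ) × ℝ × (Fin N → SymMat q) | ∀ j, (θ.2.2 j).1.PosDef} := by
    ext θ
    simp only [goodParams, Set.mem_setOf_eq, Set.mem_inter_iff, Set.mem_preimage, Set.mem_Iio,
      hIdef]
    unfold smw
    tauto
  rw [hset]
  exact (hIcont.isOpen_inter_preimage hA isOpen_Iio).inter hB


theorem stmt4 (ν : ℝ) (hν0 : 0 < ν) (hν1 : ν ≤ 1) (a b : ℝ) (hab : a < b)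
    (q : ℕ) (hq : 0 < q) (Ω : ℝ → Matrix (Fin q) (Fin q) ℝ)
    (hpd : ∀ x ∈ Set.Icc a b, (Ω x).PosDef)
    (hhold : ∀ i j : Fin q, ∃ H : ℝ, ∀ x ∈ Set.Icc a b, ∀ x' ∈ Set.Icc a b,
      |Ω x i j - Ω x' i j| ≤ H * |x - x'| ^ ν) :
    ∀ ε > 0, ∃ N : ℕ, 0 < N ∧
      IsOpen (goodParams a b q N Ω ε) ∧ (goodParams a b q N Ω ε).Nonempty := by
  intro ε hε
  have hba : 0 < b - a := sub_pos.2 hab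
  choose Hf hHf using hhold
  obtain ⟨H₀, hH₀def⟩ : ∃ H₀ : ℝ, H₀ = ∑ i : Fin q, ∑ k : Fin q, max (Hf i k) 0 := ⟨_, rfl⟩
  have hH₀ : 0 ≤ H₀ := by
    rw [hH₀def]
    exact Finset.sum_nonneg fun i _ => Finset.sum_nonneg fun k _ => le_max_right _ _
  have hmax : ∀ i k : Fin q, Hf i k ≤ H₀ := by
    intro i k
    calc Hf i k ≤ max (Hf i k) 0 := le_max_left _ _
      _ ≤ ∑ k', max (Hf i k') 0 :=
          Finset.single_le_sum (f := fun k' => max (Hf i k') 0)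
            (fun k' _ => le_max_right _ _) (Finset.mem_univ k)
      _ ≤ ∑ i', ∑ k', max (Hf i' k') 0 :=
          Finset.single_le_sum (f := fun i' => ∑ k', max (Hf i' k') 0)
            (fun i' _ => Finset.sum_nonneg fun k' _ => le_max_right _ _) (Finset.mem_univ i)
      _ = H₀ := hH₀def.symm
  have hhold₀ : ∀ (i k : Fin q), ∀ x ∈ Set.Icc a b, ∀ x' ∈ Set.Icc a b,
      |Ω x i k - Ω x' i k| ≤ H₀ * |x - x'| ^ ν := by
    intro i k x hx x' hx'
    calc |Ω x i k - Ω x' i k| ≤ Hf i k * |x - x'| ^ ν := hHf i k x hx x' hx'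
      _ ≤ H₀ * |x - x'| ^ ν :=
          mul_le_mul_of_nonneg_right (hmax i k) (Real.rpow_nonneg (abs_nonneg _) ν)
  have hΩc : ∀ i k : Fin q, ContinuousOn (fun x => Ω x i k) (Set.Icc a b) := by
    intro i k
    exact holder_contOn hν0 hH₀ (fun x hx x' hx' => hhold₀ i k x hx x' hx')
  obtain ⟨M₀, hM₀def⟩ : ∃ M₀ : ℝ,
      M₀ = (∑ i : Fin q, ∑ k : Fin q, |Ω a i k|) + H₀ * (b - a) ^ ν := ⟨_, rfl⟩
  have hbaν : (0:ℝ) ≤ (b - a) ^ ν := Real.rpow_nonneg hba.le ν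
  have hM₀ : 0 ≤ M₀ := by
    rw [hM₀def]
    have := Finset.sum_nonneg (s := (Finset.univ : Finset (Fin q)))
      (fun i _ => Finset.sum_nonneg (s := (Finset.univ : Finset (Fin q)))
        (fun k _ => abs_nonneg (Ω a i k)))
    nlinarith [mul_nonneg hH₀ hbaν]
  have hΩb : ∀ x ∈ Set.Icc a b, ∀ i k : Fin q, |Ω x i k| ≤ M₀ := by
    intro x hx i k
    have ha : a ∈ Set.Icc a b := ⟨le_refl a, hab.le⟩
    have h1 : |Ω x i k - Ω a i k| ≤ H₀ * |x - a| ^ ν := hhold₀ i k x hx a ha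
    have h2 : |x - a| ≤ b - a := by
      rw [abs_of_nonneg (sub_nonneg.2 hx.1)]
      linarith [hx.2]
    have h3 : |x - a| ^ ν ≤ (b - a) ^ ν := Real.rpow_le_rpow (abs_nonneg _) h2 hν0.le
    have h4 : |Ω a i k| ≤ ∑ i', ∑ k', |Ω a i' k'| := by
      calc |Ω a i k| ≤ ∑ k', |Ω a i k'| :=
            Finset.single_le_sum (f := fun k' => |Ω a i k'|)
              (fun k' _ => abs_nonneg _) (Finset.mem_univ k)
        _ ≤ ∑ i', ∑ k', |Ω a i' k'| :=
            Finset.single_le_sum (f := fun i' => ∑ k', |Ω a i' k'|)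
              (fun i' _ => Finset.sum_nonneg fun k' _ => abs_nonneg _) (Finset.mem_univ i)
    have h5 : |Ω x i k| - |Ω a i k| ≤ |Ω x i k - Ω a i k| := abs_sub_abs_le_abs_sub _ _
    have h6 : H₀ * |x - a| ^ ν ≤ H₀ * (b - a) ^ ν := mul_le_mul_of_nonneg_left h3 hH₀
    rw [hM₀def]
    linarith
  obtain ⟨N, hN, hne⟩ := good_nonempty ν hν0 a b hab q hq Ω hpd H₀ hH₀ hhold₀ ε hε
  exact ⟨N, hN, good_isOpen a b hab q N hq hN Ω M₀ hM₀ hΩc hΩb ε (isOpen_PD q hq), hne⟩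
end
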